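/- For all integers N ≥ 1 and 1 ≤ i ≤ N, the integral L₁(N,i) = ∫_ℝ g · exp(−(N+1−i)·g) / (1 + exp(−g))^{N+1} dg converges and equals ((N−i)!·(i−1)!/N!) · (∑_{k=1}^{i−1} 1/k − ∑_{k=1}^{N−i} 1/k), where an empty sum is 0. -/

import Mathlib

open MeasureTheory Real Set intervalIntegral

lemma logInt : IntervalIntegrable Real.log volume 0 1 := by
  rw [intervalIntegrable_iff_integrableOn_Ioc_of_le zero_le_one]
  have hmaj : IntegrableOn (fun u : ℝ => 2 * u ^ (-(1/2 : ℝ))) (Ioc 0 1) volume := by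
    have := (intervalIntegrable_rpow' (a := 0) (b := 1) (r := -(1/2)) (by norm_num)).const_mul 2
    rwa [intervalIntegrable_iff_integrableOn_Ioc_of_le zero_le_one] at this
  refine hmaj.integrable.mono Real.measurable_log.aestronglyMeasurable ?_
  filter_upwards [ae_restrict_mem measurableSet_Ioc] with u hu
  have h0 : 0 < u := hu.1
  have h1 : u ≤ 1 := hu.2
  have : |Real.log u| = Real.log u⁻¹ := by
    rw [Real.log_inv, abs_of_nonpos (Real.log_nonpos h0.le h1)]
  rw [Real.norm_eq_abs, Real.norm_eq_abs, this, abs_of_nonneg (by positivity)]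
  calc Real.log u⁻¹ ≤ (u⁻¹) ^ (1/2 : ℝ) / (1/2) :=
        Real.log_le_rpow_div (by positivity) (by norm_num)
    _ = 2 * u ^ (-(1/2 : ℝ)) := by
        rw [Real.inv_rpow h0.le, ← Real.rpow_neg h0.le]; ring

lemma polyLogInt (a b : ℕ) :
    IntervalIntegrable (fun u : ℝ => u ^ a * (1 - u) ^ b * Real.log u) volume 0 1 := by
  rw [intervalIntegrable_iff_integrableOn_Ioc_of_le zero_le_one]
  have hlog : IntegrableOn Real.log (Ioc 0 1) volume := by
    rw [← intervalIntegrable_iff_integrableOn_Ioc_of_le zero_le_one]; exact logInt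
  refine hlog.integrable.mono ?_ ?_
  · exact ((continuous_pow a).mul ((continuous_const.sub continuous_id).pow b)).aestronglyMeasurable.mul
      Real.measurable_log.aestronglyMeasurable
  · filter_upwards [ae_restrict_mem measurableSet_Ioc] with u hu
    have h0 : 0 < u := hu.1
    have h1 : u ≤ 1 := hu.2
    rw [Real.norm_eq_abs, Real.norm_eq_abs, abs_mul]
    have hb1 : |u ^ a * (1 - u) ^ b| ≤ 1 := by
      rw [abs_mul, abs_pow, abs_pow]
      have hu1 : |u| ≤ 1 := by rw [abs_of_pos h0]; exact h1
      have hu2 : |1 - u| ≤ 1 := by rw [abs_of_nonneg (by linarith)]; linarith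
      calc |u| ^ a * |1 - u| ^ b ≤ 1 * 1 :=
            mul_le_mul (pow_le_one₀ (abs_nonneg _) hu1) (pow_le_one₀ (abs_nonneg _) hu2)
              (by positivity) (by norm_num)
        _ = 1 := by norm_num
    nlinarith [abs_nonneg (Real.log u), abs_nonneg (u ^ a * (1 - u) ^ b)]

lemma baseInt (a : ℕ) :
    ∫ u in (0:ℝ)..1, u ^ a * Real.log u = -(1 / (a + 1) ^ 2) := by
  have key := intervalIntegral.integral_eq_sub_of_hasDeriv_right_of_le zero_le_one
    (f := fun u : ℝ => u ^ (a + 1) / (a + 1) * Real.log u - u ^ (a + 1) / (a + 1) ^ 2)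
    (f' := fun u : ℝ => u ^ a * Real.log u)
    ?_ ?_ ?_
  · rw [key]; norm_num
  · -- continuity on [0,1]
    have h1 : Continuous fun u : ℝ => u ^ (a + 1) / (a + 1) * Real.log u := by
      have : (fun u : ℝ => u ^ (a + 1) / (a + 1) * Real.log u)
          = fun u : ℝ => (u ^ a / (a + 1)) * (u * Real.log u) := by
        funext u; rw [pow_succ]; ring
      rw [this]
      exact ((continuous_pow a).div_const _).mul Real.continuous_mul_log
    exact (h1.sub ((continuous_pow (a+1)).div_const _)).continuousOn
  · intro x hx
    have hx0 : 0 < x := hx.1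
    have ha : ((a : ℝ) + 1) ≠ 0 := by positivity
    have hd1 : HasDerivAt (fun u : ℝ => u ^ (a + 1) / (a + 1) * Real.log u)
        (x ^ a * Real.log x + x ^ a / (a + 1)) x := by
      have := ((hasDerivAt_pow (a + 1) x).div_const ((a : ℝ) + 1)).mul (Real.hasDerivAt_log hx0.ne')
      refine this.congr_deriv ?_
      push_cast
      field_simp
      rw [pow_succ]
      ring
    have hd2 : HasDerivAt (fun u : ℝ => u ^ (a + 1) / (a + 1) ^ 2) (x ^ a / (a + 1)) x := by
      have := (hasDerivAt_pow (a + 1) x).div_const (((a : ℝ) + 1) ^ 2)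
      refine this.congr_deriv ?_
      push_cast
      field_simp
    have := (hd1.sub hd2)
    simp only [add_sub_cancel_right] at this
    exact this.hasDerivWithinAt
  · have := polyLogInt a 0
    simpa using this

noncomputable def H (n : ℕ) : ℝ := ∑ k ∈ Finset.Icc 1 n, (1 : ℝ) / k

lemma H_succ (n : ℕ) : H (n + 1) = H n + 1 / (n + 1) := by
  unfold H
  rw [← Finset.insert_Icc_right_eq_Icc_add_one (by omega), Finset.sum_insert (by simp)]
  push_cast
  ring

lemma Jval : ∀ b a : ℕ, ∫ u in (0:ℝ)..1, u ^ a * (1 - u) ^ b * Real.log u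
    = -((a.factorial * b.factorial : ℝ) / (a + b + 1).factorial) * (H (a + b + 1) - H a) := by
  intro b
  induction b with
  | zero =>
    intro a
    have h1 : H (a + 0 + 1) - H a = 1 / (a + 1) := by
      simp only [Nat.add_zero, H_succ]; ring
    simp only [pow_zero, mul_one, baseInt, Nat.add_zero, h1, Nat.factorial_one]
    rw [Nat.factorial_succ]
    have : ((a.factorial : ℝ)) ≠ 0 := Nat.cast_ne_zero.mpr a.factorial_ne_zero
    push_cast
    field_simp
    ring
  | succ b ih =>
    intro a
    have hsplit : (fun u : ℝ => u ^ a * (1 - u) ^ (b + 1) * Real.log u)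
        = fun u : ℝ => u ^ a * (1 - u) ^ b * Real.log u
            - u ^ (a + 1) * (1 - u) ^ b * Real.log u := by
      funext u; rw [pow_succ, pow_succ]; ring
    rw [hsplit, intervalIntegral.integral_sub (polyLogInt a b) (polyLogInt (a+1) b), ih a, ih (a+1)]
    have e1 : a + 1 + b + 1 = a + b + 1 + 1 := by omega
    have e2 : a + (b + 1) + 1 = a + b + 1 + 1 := by omega
    rw [e1, e2, H_succ (a + b + 1), H_succ a]
    rw [Nat.factorial_succ (a + b + 1), Nat.factorial_succ a, Nat.factorial_succ b]
    have hfa : ((a.factorial : ℝ)) ≠ 0 := Nat.cast_ne_zero.mpr a.factorial_ne_zero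
    have hfb : ((b.factorial : ℝ)) ≠ 0 := Nat.cast_ne_zero.mpr b.factorial_ne_zero
    have hfab : (((a + b + 1).factorial : ℝ)) ≠ 0 :=
      Nat.cast_ne_zero.mpr (a + b + 1).factorial_ne_zero
    have h1 : ((a : ℝ) + 1) ≠ 0 := by positivity
    have h2 : ((a : ℝ) + (b : ℝ) + 1 + 1) ≠ 0 := by positivity
    push_cast
    field_simp
    ring

lemma polyLogInt2 (a b : ℕ) :
    IntervalIntegrable (fun u : ℝ => u ^ a * (1 - u) ^ b * Real.log (1 - u)) volume 0 1 := by
  have h := ((polyLogInt b a).comp_sub_left 1)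
  simp only [sub_sub_cancel, sub_zero, sub_self] at h
  have e : (fun x : ℝ => (1 - x) ^ b * x ^ a * Real.log (1 - x))
      = fun u : ℝ => u ^ a * (1 - u) ^ b * Real.log (1 - u) := by
    funext u; ring
  rw [e] at h
  exact h.symm

lemma Jval2 (a b : ℕ) : ∫ u in (0:ℝ)..1, u ^ a * (1 - u) ^ b * Real.log (1 - u)
    = -((a.factorial * b.factorial : ℝ) / (a + b + 1).factorial) * (H (a + b + 1) - H b) := by
  have h := intervalIntegral.integral_comp_sub_left
    (a := 0) (b := 1) (fun v : ℝ => v ^ b * (1 - v) ^ a * Real.log v) 1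
  simp only [sub_zero, sub_self] at h
  rw [intervalIntegral.integral_congr
      (g := fun x : ℝ => (1 - x) ^ b * (1 - (1 - x)) ^ a * Real.log (1 - x))
      (fun x _ => by simp only [sub_sub_cancel]; ring), h, Jval a b]
  have e2 : b + a + 1 = a + b + 1 := by omega
  rw [e2]
  ring

/-- The first-moment integral
`L₁(N,i) = ∫ g·exp(−(N+1−i)g)/(1+exp(−g))^{N+1} dg` converges and equals
`((N−i)!·(i−1)!/N!)·(∑_{k=1}^{i−1} 1/k − ∑_{k=1}^{N−i} 1/k)`. -/
theorem logistic_order_statistic_first_moment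
    (N i : ℕ) (hi1 : 1 ≤ i) (hiN : i ≤ N) :
    Integrable (fun g : ℝ => g * exp (-((N + 1 - i : ℕ) * g)) / (1 + exp (-g)) ^ (N + 1)) ∧
    (∫ g : ℝ, g * exp (-((N + 1 - i : ℕ) * g)) / (1 + exp (-g)) ^ (N + 1))
      = (((N - i).factorial * (i - 1).factorial : ℝ) / N.factorial)
          * ((∑ k ∈ Finset.Icc 1 (i - 1), (1 : ℝ) / k)
              - ∑ k ∈ Finset.Icc 1 (N - i), (1 : ℝ) / k) := by
  obtain ⟨a, rfl⟩ : ∃ a, i = a + 1 := ⟨i - 1, by omega⟩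
  obtain ⟨b, rfl⟩ : ∃ b, N = a + 1 + b := ⟨N - (a + 1), by omega⟩
  have hc : (a + 1 + b + 1 - (a + 1) : ℕ) = b + 1 := by omega
  have hNi : (a + 1 + b - (a + 1) : ℕ) = b := by omega
  have hi1' : (a + 1 - 1 : ℕ) = a := by omega
  rw [hc, hNi, hi1']
  set f : ℝ → ℝ := fun g : ℝ => g * exp (-((b + 1 : ℕ) * g)) / (1 + exp (-g)) ^ (a + 1 + b + 1)
    with hf
  set φ : ℝ → ℝ := fun u => Real.log u - Real.log (1 - u) with hφ
  set φ' : ℝ → ℝ := fun u => u⁻¹ + (1 - u)⁻¹ with hφ'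
  -- derivative
  have hderiv : ∀ x ∈ Ioo (0:ℝ) 1, HasDerivWithinAt φ (φ' x) (Ioo (0:ℝ) 1) x := by
    intro x hx
    have hx0 : (0:ℝ) < x := hx.1
    have hx1 : (0:ℝ) < 1 - x := by linarith [hx.2]
    have h1 : HasDerivAt (fun u : ℝ => 1 - u) (-1) x := by
      simpa using (hasDerivAt_id x).const_sub 1
    have h2 : HasDerivAt (fun u : ℝ => Real.log (1 - u)) ((1 - x)⁻¹ * (-1)) x :=
      (Real.hasDerivAt_log hx1.ne').comp x h1
    have h3 : HasDerivAt φ (x⁻¹ - (1 - x)⁻¹ * (-1)) x :=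
      (Real.hasDerivAt_log hx0.ne').sub h2
    have : x⁻¹ - (1 - x)⁻¹ * (-1) = φ' x := by rw [hφ']; ring
    rw [this] at h3
    exact h3.hasDerivWithinAt
  -- exp of φ
  have hexp : ∀ x ∈ Ioo (0:ℝ) 1, Real.exp (φ x) = x / (1 - x) := by
    intro x hx
    have hx0 : (0:ℝ) < x := hx.1
    have hx1 : (0:ℝ) < 1 - x := by linarith [hx.2]
    rw [hφ]
    simp only []
    rw [Real.exp_sub, Real.exp_log hx0, Real.exp_log hx1]
  -- injectivity
  have hinj : InjOn φ (Ioo (0:ℝ) 1) := by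
    intro x hx y hy hxy
    have hx1 : (0:ℝ) < 1 - x := by linarith [hx.2]
    have hy1 : (0:ℝ) < 1 - y := by linarith [hy.2]
    have := congrArg Real.exp hxy
    rw [hexp x hx, hexp y hy, div_eq_div_iff hx1.ne' hy1.ne'] at this
    nlinarith [this]
  -- image
  have himg : φ '' Ioo (0:ℝ) 1 = univ := by
    apply eq_univ_of_forall
    intro g
    have hp : (0:ℝ) < 1 + Real.exp (-g) := by positivity
    refine ⟨1 / (1 + Real.exp (-g)), ⟨by positivity, ?_⟩, ?_⟩
    · rw [div_lt_one hp]; linarith [Real.exp_pos (-g)]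
    · have h1u : 1 - 1 / (1 + Real.exp (-g)) = Real.exp (-g) / (1 + Real.exp (-g)) := by
        field_simp
        ring
      apply Real.exp_injective
      rw [hexp _ ⟨by positivity, by rw [div_lt_one hp]; linarith [Real.exp_pos (-g)]⟩]
      rw [h1u]
      have key : Real.exp g * Real.exp (-g) = 1 := by rw [← Real.exp_add]; simp
      rw [div_div_div_eq]
      field_simp
      nlinarith [key, Real.exp_pos (-g)]
  have hmeas : MeasurableSet (Ioo (0:ℝ) 1) := measurableSet_Ioo
  -- pointwise identity
  have hpt : ∀ u ∈ Ioo (0:ℝ) 1, |φ' u| • f (φ u)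
      = (Real.log u - Real.log (1 - u)) * (u ^ a * (1 - u) ^ b) := by
    intro u hu
    have hu0 : (0:ℝ) < u := hu.1
    have hu1 : (0:ℝ) < 1 - u := by linarith [hu.2]
    have he : Real.exp (-(φ u)) = (1 - u) / u := by
      rw [Real.exp_neg, hexp u hu, inv_div]
    have he2 : Real.exp (-((b + 1 : ℕ) * φ u)) = ((1 - u) / u) ^ (b + 1) := by
      rw [show (-((b + 1 : ℕ) * φ u)) = ((b + 1 : ℕ) : ℝ) * (-(φ u)) by ring,
        Real.exp_nat_mul, he]
    have he3 : 1 + Real.exp (-(φ u)) = 1 / u := by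
      rw [he]; field_simp; ring
    have habs : |φ' u| = u⁻¹ + (1 - u)⁻¹ := by
      rw [hφ']; exact abs_of_pos (by positivity)
    rw [smul_eq_mul, hf]
    simp only []
    rw [he2, he3, habs, hφ]
    simp only []
    rw [div_pow, div_pow, one_pow]
    field_simp
    ring
  -- integrability on Ioo
  have hψ : IntegrableOn (fun u : ℝ => (Real.log u - Real.log (1 - u)) * (u ^ a * (1 - u) ^ b))
      (Ioo (0:ℝ) 1) := by
    have h1 := (polyLogInt a b).sub (polyLogInt2 a b)
    rw [intervalIntegrable_iff_integrableOn_Ioo_of_le zero_le_one] at h1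
    exact h1.congr_fun (fun u hu => by ring) hmeas
  have hInt : IntegrableOn (fun u : ℝ => |φ' u| • f (φ u)) (Ioo (0:ℝ) 1) :=
    hψ.congr_fun (fun u hu => (hpt u hu).symm) hmeas
  have hint2 := (integrableOn_image_iff_integrableOn_abs_deriv_smul hmeas hderiv hinj f).mpr hInt
  rw [himg] at hint2
  refine ⟨integrableOn_univ.mp hint2, ?_⟩
  have hval := integral_image_eq_integral_abs_deriv_smul hmeas hderiv hinj f
  rw [himg, Measure.restrict_univ] at hval
  have hval2 : ∫ u in Ioo (0:ℝ) 1, |φ' u| • f (φ u)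
      = ∫ u in Ioo (0:ℝ) 1, (Real.log u - Real.log (1 - u)) * (u ^ a * (1 - u) ^ b) :=
    setIntegral_congr_fun hmeas (fun u hu => hpt u hu)
  have hval3 : (∫ u in Ioo (0:ℝ) 1, (Real.log u - Real.log (1 - u)) * (u ^ a * (1 - u) ^ b))
      = ∫ u in (0:ℝ)..1, (u ^ a * (1 - u) ^ b * Real.log u - u ^ a * (1 - u) ^ b * Real.log (1 - u)) := by
    rw [intervalIntegral.integral_of_le zero_le_one, MeasureTheory.integral_Ioc_eq_integral_Ioo]
    exact setIntegral_congr_fun hmeas (fun u hu => by ring)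
  rw [hval, hval2, hval3,
    intervalIntegral.integral_sub (polyLogInt a b) (polyLogInt2 a b), Jval b a, Jval2 a b]
  have e3 : a + 1 + b = a + b + 1 := by omega
  rw [e3]
  show _ = ((b.factorial * a.factorial : ℝ) / (a + b + 1).factorial) * (H a - H b)
  ring
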